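/- For every ε with 0 < ε < 1/4 there exists d₀ ∈ ℕ such that for all d ≥ d₀, for every subset A ⊆ {0,…,d−1} with d/3 ≤ |A| ≤ d/2 and B its complement, setting M = ⌈2^{(1/4−ε)·d}⌉, there exist at least M distinct assignments x : A → {0,1} each of which admits at least 2M² + 1 assignments y : B → {0,1} such that ι_A(x) + ι_B(y) + 1 is prime. -/

import Mathlib

/-- The encoding ι_A(x) = ∑_{i∈A} 2^i · x(i) of an assignment x : A → {0,1}. -/
def enc (A : Finset ℕ) (x : A → Fin 2) : ℕ := ∑ i : A, 2 ^ (i : ℕ) * (x i : ℕ)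

theorem aux_bitsum (d n : ℕ) : ∑ i ∈ Finset.range d, 2^i * (n.testBit i).toNat = n % 2^d := by
  induction d with
  | zero => simp [Nat.mod_one]
  | succ d ih =>
    rw [Finset.sum_range_succ, ih, Nat.mod_pow_succ]
    have : (n.testBit d).toNat = n / 2^d % 2 := by
      rw [Nat.testBit_eq_decide_div_mod_eq]
      rcases Nat.mod_two_eq_zero_or_one (n / 2^d) with h | h <;> simp [h]
    rw [this]

/-- The assignment given by the binary digits of `n`. -/
def bitf (n : ℕ) : ℕ → Fin 2 := fun i => if n.testBit i then 1 else 0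

theorem aux_enc_bitf (A : Finset ℕ) (n : ℕ) :
    enc A (fun i => bitf n i) = ∑ i ∈ A, 2^i * (n.testBit i).toNat := by
  unfold enc
  rw [← Finset.sum_attach A (fun i => 2^i * (n.testBit i).toNat)]
  apply Finset.sum_congr rfl
  intro i _
  congr 1
  unfold bitf
  rcases h : n.testBit i <;> simp [h]

theorem aux_enc_split (d : ℕ) (A : Finset ℕ) (hA : A ⊆ Finset.range d) (n : ℕ) (hn : n < 2^d) :
    enc A (fun i => bitf n i) + enc (Finset.range d \ A) (fun i => bitf n i) = n := by
  rw [aux_enc_bitf, aux_enc_bitf, add_comm, Finset.sum_sdiff hA, aux_bitsum,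
    Nat.mod_eq_of_lt hn]

theorem aux_count_le (d : ℕ) (A : Finset ℕ) (hA : A ⊆ Finset.range d) :
    ((Finset.range (2^d)).filter (fun n => Nat.Prime (n+1))).card ≤
    ∑ x : A → Fin 2, (Finset.univ.filter fun y : ↥(Finset.range d \ A) → Fin 2 =>
      Nat.Prime (enc A x + enc (Finset.range d \ A) y + 1)).card := by
  set B := Finset.range d \ A with hB
  set T : Finset ((A → Fin 2) × (B → Fin 2)) :=
    Finset.univ.filter (fun p => Nat.Prime (enc A p.1 + enc B p.2 + 1)) with hT
  have h1 : ((Finset.range (2^d)).filter (fun n => Nat.Prime (n+1))).card ≤ T.card := by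
    apply Finset.card_le_card_of_injOn
      (fun n => ((fun i : A => bitf n i), (fun i : B => bitf n i)))
    · intro n hn
      simp only [Finset.mem_coe, Finset.mem_filter, Finset.mem_range] at hn
      simp only [Finset.mem_coe, hT, Finset.mem_filter, Finset.mem_univ, true_and]
      rw [aux_enc_split d A hA n hn.1]
      exact hn.2
    · intro n hn m hm h
      simp only [Finset.mem_coe, Finset.mem_filter, Finset.mem_range] at hn hm
      have h1 : (fun i : A => bitf n i) = (fun i : A => bitf m i) := congrArg Prod.fst h
      have h2 : (fun i : B => bitf n i) = (fun i : B => bitf m i) := congrArg Prod.snd h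
      calc n = enc A (fun i => bitf n i) + enc B (fun i => bitf n i) :=
            (aux_enc_split d A hA n hn.1).symm
      _ = enc A (fun i => bitf m i) + enc B (fun i => bitf m i) := by rw [h1, h2]
      _ = m := aux_enc_split d A hA m hm.1
  refine h1.trans ?_
  rw [Finset.card_eq_sum_card_fiberwise (f := Prod.fst) (t := Finset.univ)
    (fun x _ => Finset.mem_univ _)]
  apply Finset.sum_le_sum
  intro x _
  apply Finset.card_le_card_of_injOn Prod.snd
  · intro p hp
    simp only [Finset.mem_coe, hT, Finset.mem_filter, Finset.mem_univ, true_and] at hp ⊢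
    rw [← hp.2]
    exact hp.1
  · intro p hp q hq h
    simp only [Finset.mem_coe, Finset.mem_filter] at hp hq
    exact Prod.ext (hp.2.trans hq.2.symm) h

/-- Chebyshev-type lower bound on the number of primes up to `2^d`. -/
theorem aux_cheb (d : ℕ) (hd : 3 ≤ d) :
    2^d ≤ d * (((Finset.range (2^d)).filter (fun n => Nat.Prime (n+1))).card + 1) := by
  set P := (Finset.range (2^d)).filter (fun n => Nat.Prime (n+1)) with hP
  set n := 2^(d-1) with hn
  have h2n : 2*n = 2^d := by
    rw [hn, ← pow_succ']
    congr 1; omega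
  have h4 : 4 ≤ n := by
    calc 4 = 2^2 := rfl
    _ ≤ 2^(d-1) := Nat.pow_le_pow_right (by norm_num) (by omega)
  have hb := Nat.four_pow_lt_mul_centralBinom n (by omega)
  set N := Nat.centralBinom n with hNdef
  have hN0 : N ≠ 0 := (Nat.centralBinom_pos n).ne'
  have hcard : N.primeFactors.card ≤ P.card := by
    apply Finset.card_le_card_of_injOn (fun p => p - 1)
    · intro p hp
      have hpp : p.Prime := Nat.prime_of_mem_primeFactors hp
      have hdvd : p ∣ N := Nat.dvd_of_mem_primeFactors hp
      have hle : p ≤ 2*n := by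
        have h1 : 1 ≤ N.factorization p := by
          rw [← Nat.Prime.pow_dvd_iff_le_factorization hpp hN0, pow_one]; exact hdvd
        calc p = p^1 := (pow_one p).symm
        _ ≤ p^(N.factorization p) := Nat.pow_le_pow_right hpp.pos h1
        _ ≤ 2*n := by
          rw [hNdef, Nat.centralBinom]
          exact Nat.pow_factorization_choose_le (by omega)
      have hp2 : 2 ≤ p := hpp.two_le
      simp only [Finset.mem_coe, hP, Finset.mem_filter, Finset.mem_range]
      constructor
      · omega
      · rwa [Nat.sub_add_cancel (by omega)]
    · intro p hp q hq h
      have := (Nat.prime_of_mem_primeFactors hp).two_le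
      have := (Nat.prime_of_mem_primeFactors hq).two_le
      dsimp only at h
      omega
  have hNle : N ≤ (2^d) ^ P.card := by
    calc N = N.factorization.prod (· ^ ·) := (Nat.factorization_prod_pow_eq_self hN0).symm
    _ = ∏ p ∈ N.primeFactors, p ^ N.factorization p := by
        rw [← Nat.support_factorization]
        rfl
    _ ≤ ∏ _p ∈ N.primeFactors, 2^d := by
        apply Finset.prod_le_prod'
        intro p _
        rw [← h2n, hNdef, Nat.centralBinom]
        exact Nat.pow_factorization_choose_le (by omega)
    _ = (2^d) ^ N.primeFactors.card := Finset.prod_const _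
    _ ≤ (2^d) ^ P.card := Nat.pow_le_pow_right (by positivity) hcard
  have key : 2^(2*n) ≤ 2^(d * (P.card + 1)) := by
    calc 2^(2*n) = 4^n := by rw [pow_mul]; norm_num
    _ ≤ n * N := hb.le
    _ ≤ n * (2^d)^P.card := Nat.mul_le_mul_left n hNle
    _ = 2^(d-1 + d * P.card) := by rw [hn, ← pow_mul, ← pow_add]
    _ ≤ 2^(d * (P.card+1)) := Nat.pow_le_pow_right (by norm_num) (by ring_nf; omega)
  rw [← h2n]
  exact (Nat.pow_le_pow_iff_right (by norm_num)).mp key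

theorem aux_sq_lt_two_pow (n : ℕ) (h : 5 ≤ n) : n^2 < 2^n := by
  induction n, h using Nat.le_induction with
  | base => norm_num
  | succ n hn ih =>
    have h2 : (n+1)^2 ≤ 2 * n^2 := by nlinarith
    calc (n+1)^2 ≤ 2 * n^2 := h2
    _ < 2 * 2^n := by omega
    _ = 2^(n+1) := (pow_succ' 2 n).symm

theorem aux_contra (d v P : ℕ) (hvd : v ≤ d) (hfin : 3*d < 2^v)
    (hP : P ≤ 2*2^(d-v)) (hcheb : 2^d ≤ d*(P+1)) : False := by
  have h1 : 1 ≤ 2^(d-v) := Nat.one_le_two_pow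
  have hlt : 2^d < 2^d := by
    calc 2^d ≤ d*(P+1) := hcheb
    _ ≤ d*(2*2^(d-v)+1) := Nat.mul_le_mul_left d (by omega)
    _ ≤ 3*d*2^(d-v) := by nlinarith
    _ < 2^v * 2^(d-v) := Nat.mul_lt_mul_of_pos_right hfin (by positivity)
    _ = 2^d := by rw [← pow_add]; congr 1; omega
  omega

theorem aux_hv1 (k d m Bc : ℕ) (hk : 12 ≤ k) (hd : 12 ≤ d)
    (hmb : 4*k*m + 4*d ≤ k*d + 4*k) (hBc : 3*Bc ≤ 2*d) :
    m + Bc + d/k ≤ d := by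
  have hkv : k * (d/k) ≤ d := Nat.mul_div_le d k
  have h12 : 12*k ≤ k*d := by nlinarith
  have key : 12*k*(m + Bc + d/k) ≤ 12*k*d := by nlinarith
  exact Nat.le_of_mul_le_mul_left key (by omega)

theorem aux_hv2 (k d m Ac : ℕ) (hk : 12 ≤ k) (hd : 3*k ≤ d)
    (hmb : 4*k*m + 4*d ≤ k*d + 4*k) (hAc : 2*Ac ≤ d) :
    2*m + Ac + 1 + d/k ≤ d := by
  have hkv : k * (d/k) ≤ d := Nat.mul_div_le d k
  have key : 4*k*(2*m + Ac + 1 + d/k) ≤ 4*k*d := by nlinarith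
  exact Nat.le_of_mul_le_mul_left key (by omega)

theorem aux_final (k d : ℕ) (hk : 12 ≤ k) (hd : 100*k^2 ≤ d) : 3*d < 2^(d/k) := by
  set v := d/k with hv
  have h1 : k * v ≤ d := Nat.mul_div_le d k
  have h2 : d < k * (v+1) := Nat.lt_mul_div_succ d (by omega)
  have hv1 : 100*k ≤ v := by
    have h : k * (100*k) < k * (v+1) := by nlinarith
    have := Nat.lt_of_mul_lt_mul_left h
    omega
  have h3 : d < 2*k*v := by nlinarith
  have h4 : 25*d < v^2 := by nlinarith
  have h5 : v^2 < 2^v := aux_sq_lt_two_pow v (by omega)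
  omega

/-- for 0 < ε < 1/4 and sufficiently large d, for any A ⊆ {0,…,d−1} with
d/3 ≤ |A| ≤ d/2 and B its complement, with M = ⌈2^{(1/4−ε)d}⌉, there are at least M
distinct assignments of A each admitting at least 2M² + 1 prime completions. -/
theorem stmt_2 :
    ∀ ε : ℝ, 0 < ε → ε < 1/4 →
    ∃ d₀ : ℕ, ∀ d : ℕ, d₀ ≤ d →
    ∀ A : Finset ℕ, A ⊆ Finset.range d →
      (d : ℝ) / 3 ≤ (A.card : ℝ) → (A.card : ℝ) ≤ (d : ℝ) / 2 →
    ∀ B : Finset ℕ, B = Finset.range d \ A →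
    ∀ M : ℕ, M = ⌈(2 : ℝ) ^ ((1/4 - ε) * d)⌉₊ →
    ∃ S : Finset (A → Fin 2), M ≤ S.card ∧
      ∀ x ∈ S, 2 * M ^ 2 + 1 ≤
        (Finset.univ.filter fun y : B → Fin 2 =>
          Nat.Prime (enc A x + enc B y + 1)).card := by
  intro ε hε hε4
  set k := ⌈1/ε⌉₊ + 12 with hkdef
  have hk12 : 12 ≤ k := by omega
  have hkε : (1:ℝ) ≤ (k:ℝ) * ε := by
    have h1 : 1/ε ≤ (k:ℝ) := by
      calc 1/ε ≤ (⌈1/ε⌉₊ : ℝ) := Nat.le_ceil _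
      _ ≤ (k:ℝ) := by exact_mod_cast Nat.le_add_right _ 12
    rw [div_le_iff₀ hε] at h1
    linarith
  refine ⟨100*k^2, ?_⟩
  intro d hd A hA hA1 hA2 B hBdef M hM
  subst hBdef
  set B := Finset.range d \ A with hB
  -- basic size facts
  have hd12 : 12 ≤ d := by nlinarith
  have hd3k : 3*k ≤ d := by nlinarith
  have h3A : d ≤ 3 * A.card := by
    have : (d:ℝ) ≤ 3 * A.card := by linarith
    exact_mod_cast this
  have h2A : 2 * A.card ≤ d := by
    have : 2 * (A.card:ℝ) ≤ d := by linarith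
    exact_mod_cast this
  have hBcard : B.card = d - A.card := by
    rw [hB, Finset.card_sdiff_of_subset hA, Finset.card_range]
  have h3B : 3 * B.card ≤ 2 * d := by omega
  -- m and bounds on M
  set m := ⌈(1/4 - ε) * (d:ℝ)⌉₊ with hm
  have hexp_nonneg : (0:ℝ) ≤ (1/4 - ε) * d := by
    apply mul_nonneg (by linarith) (Nat.cast_nonneg d)
  have hMle : M ≤ 2^m := by
    rw [hM]
    apply Nat.ceil_le.mpr
    calc (2:ℝ) ^ ((1/4 - ε) * (d:ℝ)) ≤ (2:ℝ) ^ ((m:ℕ):ℝ) :=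
          Real.rpow_le_rpow_of_exponent_le one_le_two (Nat.le_ceil _)
    _ = ((2^m : ℕ) : ℝ) := by rw [Real.rpow_natCast]; push_cast; ring
  have hmb : 4*k*m + 4*d ≤ k*d + 4*k := by
    have h1 : (m:ℝ) < (1/4 - ε) * d + 1 := Nat.ceil_lt_add_one hexp_nonneg
    have hd0 : (0:ℝ) ≤ (d:ℝ) := Nat.cast_nonneg d
    have hk0 : (0:ℝ) ≤ (k:ℝ) := Nat.cast_nonneg k
    have key : (4*k*m + 4*d : ℝ) ≤ (k*d + 4*k : ℝ) := by nlinarith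
    exact_mod_cast key
  -- exponent bounds
  set v := d/k with hv
  have hkv : k * v ≤ d := Nat.mul_div_le d k
  have hvd : v ≤ d := Nat.div_le_self d k
  have hv1 : m + B.card + v ≤ d := aux_hv1 k d m B.card hk12 hd12 hmb h3B
  have hv2 : 2*m + A.card + 1 + v ≤ d := aux_hv2 k d m A.card hk12 hd3k hmb h2A
  have hfin : 3*d < 2^v := aux_final k d hk12 hd
  -- the counting argument
  set c : (A → Fin 2) → ℕ := fun x =>
    (Finset.univ.filter fun y : B → Fin 2 => Nat.Prime (enc A x + enc B y + 1)).card with hc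
  refine ⟨Finset.univ.filter (fun x => 2*M^2 + 1 ≤ c x), ?_, ?_⟩
  · -- M ≤ card, by contradiction
    by_contra hS
    push_neg at hS
    set S := Finset.univ.filter (fun x : A → Fin 2 => 2*M^2 + 1 ≤ c x) with hSdef
    have hcle : ∀ x : A → Fin 2, c x ≤ 2^B.card := by
      intro x
      calc c x ≤ (Finset.univ : Finset (B → Fin 2)).card := Finset.card_filter_le _ _
      _ = 2^B.card := by
          rw [Finset.card_univ, Fintype.card_fun, Fintype.card_fin, Fintype.card_coe]
    have hsum : ∑ x : A → Fin 2, c x ≤ S.card * 2^B.card + 2^A.card * (2*M^2) := by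
      rw [← Finset.sum_filter_add_sum_filter_not Finset.univ (fun x => 2*M^2 + 1 ≤ c x) c]
      apply Nat.add_le_add
      · calc ∑ x ∈ S, c x ≤ S.card * 2^B.card := by
              apply Finset.sum_le_card_nsmul
              intro x _
              exact hcle x
        _ = S.card * 2^B.card := rfl
      · calc ∑ x ∈ Finset.univ.filter (fun x => ¬(2*M^2 + 1 ≤ c x)), c x
            ≤ (Finset.univ.filter (fun x : A → Fin 2 => ¬(2*M^2 + 1 ≤ c x))).card * (2*M^2) := by
              apply Finset.sum_le_card_nsmul
              intro x hx
              simp only [Finset.mem_filter] at hx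
              omega
        _ ≤ (Finset.univ : Finset (A → Fin 2)).card * (2*M^2) := by
              apply Nat.mul_le_mul_right
              exact Finset.card_filter_le _ _
        _ = 2^A.card * (2*M^2) := by
              rw [Finset.card_univ, Fintype.card_fun, Fintype.card_fin, Fintype.card_coe]
    have hP := aux_count_le d A hA
    have hPcard : ((Finset.range (2^d)).filter (fun n => Nat.Prime (n+1))).card
        ≤ 2*2^(d - v) := by
      calc ((Finset.range (2^d)).filter (fun n => Nat.Prime (n+1))).card
          ≤ ∑ x : A → Fin 2, c x := hP
      _ ≤ S.card * 2^B.card + 2^A.card * (2*M^2) := hsum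
      _ ≤ 2^m * 2^B.card + 2^A.card * (2 * (2^m)^2) := by
            apply Nat.add_le_add
            · exact Nat.mul_le_mul_right _ (by omega)
            · apply Nat.mul_le_mul_left
              have : M^2 ≤ (2^m)^2 := Nat.pow_le_pow_left hMle 2
              omega
      _ = 2^(m + B.card) + 2^(2*m + A.card + 1) := by ring
      _ ≤ 2^(d - v) + 2^(d - v) := by
            apply Nat.add_le_add <;>
              exact Nat.pow_le_pow_right (by norm_num) (by omega)
      _ = 2*2^(d - v) := by ring
    have hcheb := aux_cheb d (by omega)
    exact aux_contra d v _ hvd hfin hPcard hcheb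
  · intro x hx
    simp only [Finset.mem_filter] at hx
    exact hx.2
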